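/- Let S = {e, x₁, ..., x₁₅} with operation x_i ∘ x_j = x_i for i ≠ j, x_i ∘ x_i = e, and e as identity. Then for i ≠ j the right inner mapping f(x_i, x_j) is the transposition swapping x_i and x_j and fixing all other elements; consequently the right inner mapping group G_S equals Sym(S \ {e}). -/

import Mathlib

/-- The operation on `S = {e, x₁, …, x₁₅}` (encoded as `Fin 16` with `e = 0`):
`e` is a two-sided identity, `x_i ∘ x_j = x_i` for `i ≠ j`, and `x_i ∘ x_i = e`. -/
def exOp (i j : Fin 16) : Fin 16 :=
  if i = 0 then j else if j = 0 then i else if i = j then 0 else i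

lemma exOp_right (i : Fin 16) (hi : i ≠ 0) (a : Fin 16) :
    exOp a i = Equiv.swap 0 i a := by
  rcases eq_or_ne a 0 with rfl | ha
  · simp [exOp, hi]
  · rcases eq_or_ne a i with rfl | hai
    · simp [exOp, ha, hi]
    · simp [exOp, ha, hi, hai, Equiv.swap_apply_of_ne_of_ne]

lemma exOp_self_ne (i j : Fin 16) (hi : i ≠ 0) (hj : j ≠ 0) (hij : i ≠ j) :
    exOp i j = i := by simp [exOp, hi, hj, hij]

lemma swap_decomp (i j : Fin 16) (hi : i ≠ 0) (hj : j ≠ 0) (hij : i ≠ j) :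
    Equiv.swap 0 i * Equiv.swap 0 j * Equiv.swap 0 i = Equiv.swap i j := by
  have h := Equiv.swap_apply_apply (Equiv.swap 0 i) 0 j
  rw [Equiv.swap_apply_left, Equiv.swap_apply_of_ne_of_ne hj (Ne.symm hij), Equiv.swap_inv] at h
  exact h.symm

lemma swap_mem_set (i j : Fin 16) (hi : i ≠ 0) (hj : j ≠ 0) (hij : i ≠ j) :
    ∀ w, exOp (Equiv.swap i j w) (exOp i j) = exOp (exOp w i) j := by
  intro w
  rw [exOp_self_ne i j hi hj hij, exOp_right i hi, exOp_right i hi, exOp_right j hj]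
  rw [← swap_decomp i j hi hj hij]
  simp [Equiv.Perm.mul_apply, Equiv.swap_apply_self]

/-- For `i ≠ j` (both nonidentity), the right inner mapping `f(x_i, x_j)`
(the unique permutation `F` with `F(w) ∘ (x_i∘x_j) = (w∘x_i)∘x_j`) is the
transposition swapping `x_i` and `x_j`; consequently the right inner mapping group
`G_S` (generated by all right inner mappings) is `Sym(S \ {e})`, i.e. the
stabilizer of `e` in `Sym(S)`. -/
theorem exInnerMappings_swap_and_GS :
    (∀ i j : Fin 16, i ≠ 0 → j ≠ 0 → i ≠ j →
      ∀ F : Equiv.Perm (Fin 16),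
        (∀ w, exOp (F w) (exOp i j) = exOp (exOp w i) j) → F = Equiv.swap i j) ∧
    Subgroup.closure
        {π : Equiv.Perm (Fin 16) | ∃ y z, ∀ w, exOp (π w) (exOp y z) = exOp (exOp w y) z}
      = MulAction.stabilizer (Equiv.Perm (Fin 16)) (0 : Fin 16) := by
  constructor
  · intro i j hi hj hij F hF
    ext w
    have h := hF w
    rw [exOp_self_ne i j hi hj hij, exOp_right i hi, exOp_right i hi, exOp_right j hj] at h
    have h2 := congrArg (Equiv.swap 0 i) h
    rw [Equiv.swap_apply_self] at h2
    rw [h2, ← Equiv.Perm.mul_apply, ← Equiv.Perm.mul_apply, swap_decomp i j hi hj hij]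
  · apply le_antisymm
    · rw [Subgroup.closure_le]
      rintro π ⟨y, z, hπ⟩
      have h0 := hπ 0
      have hy : exOp 0 y = y := by simp [exOp]
      rw [hy] at h0
      set c := exOp y z with hc
      rcases eq_or_ne c 0 with hc0 | hc0
      · rw [hc0] at h0
        have : ∀ a : Fin 16, exOp a 0 = a := by intro a; simp [exOp]; intro h; exact h.symm
        rw [this] at h0
        simpa [MulAction.mem_stabilizer_iff] using h0
      · rw [exOp_right c hc0] at h0
        have : Equiv.swap 0 c (π 0) = Equiv.swap 0 c 0 := by
          rw [Equiv.swap_apply_left]; exact h0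
        have := (Equiv.swap 0 c).injective this
        simpa [MulAction.mem_stabilizer_iff] using this
    · intro σ hσ
      have hσ0 : σ 0 = 0 := hσ
      have hp : ∀ x : Fin 16, x ≠ 0 ↔ σ x ≠ 0 := by
        intro x
        constructor
        · intro hx h
          exact hx (σ.injective (h.trans hσ0.symm))
        · intro hx h
          exact hx (by rw [h, hσ0])
      set τ := σ.subtypePerm (p := fun x => x ≠ 0) (fun x => (hp x).symm) with hτ
      have hof : Equiv.Perm.ofSubtype τ = σ :=
        Equiv.Perm.ofSubtype_subtypePerm (p := fun x => x ≠ 0) (fun x => (hp x).symm) (fun x hx => by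
          intro h0; apply hx; rw [h0, hσ0])
      have htop : τ ∈ Subgroup.closure {σ : Equiv.Perm {x : Fin 16 // x ≠ 0} | σ.IsSwap} := by
        rw [Equiv.Perm.closure_isSwap]; trivial
      have hmap : σ ∈ Subgroup.map (Equiv.Perm.ofSubtype)
          (Subgroup.closure {σ : Equiv.Perm {x : Fin 16 // x ≠ 0} | σ.IsSwap}) :=
        ⟨τ, htop, hof⟩
      rw [MonoidHom.map_closure] at hmap
      refine Subgroup.closure_mono ?_ hmap
      rintro π ⟨ρ, ⟨a, b, hab, rfl⟩, rfl⟩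
      rw [Equiv.Perm.ofSubtype_swap_eq]
      exact ⟨a, b, swap_mem_set a b a.prop b.prop (fun h => hab (Subtype.ext h))⟩
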